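/- Let A be a finite set, let f : A → B be a function into a set B, let ℓ̃ := |A| − |f(A)| where f(A) denotes the image of A under f, let r ∈ [0,1], and let (I_x)_{x∈A} be independent Bernoulli random variables with Pr[I_x = 1] ≥ r for each x ∈ A. Then the probability that every fiber of f contains at most one x with I_x = 1 (that is, Pr[ for all b ∈ B, |{x ∈ f⁻¹(b) : I_x = 1}| ≤ 1 ]) is at most (1 − r²)^{ℓ̃}, and hence at most exp(−ℓ̃·r²). -/

import Mathlib

open MeasureTheory ProbabilityTheory Finset

/-- If two events depend only on the variables in two disjoint finsets of indices,
their measures multiply. -/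
lemma dep_mul {Ω A : Type*} [MeasurableSpace Ω] (μ : Measure Ω) [DecidableEq A]
    (I : A → Ω → ℕ) (hmeas : ∀ x, Measurable (I x))
    (hindep : iIndepFun I μ)
    (T U : Finset A) (hTU : Disjoint T U) (s t : Set Ω)
    (hs : ∀ ω ω', (∀ y ∈ T, I y ω = I y ω') → ω ∈ s → ω' ∈ s)
    (ht : ∀ ω ω', (∀ y ∈ U, I y ω = I y ω') → ω ∈ t → ω' ∈ t) :
    μ (s ∩ t) = μ s * μ t := by
  have hrep : ∀ (V : Finset A) (u : Set Ω),
      (∀ ω ω', (∀ y ∈ V, I y ω = I y ω') → ω ∈ u → ω' ∈ u) →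
      u = (fun ω (y : V) => I y.1 ω) ⁻¹' ((fun ω (y : V) => I y.1 ω) '' u) := by
    intro V u hu
    ext ω'
    constructor
    · exact fun h => Set.mem_image_of_mem _ h
    · rintro ⟨ω, hω, hEq⟩
      exact hu ω ω' (fun y hy => congrFun hEq ⟨y, hy⟩) hω
  have hind := hindep.indepFun_finset T U hTU hmeas
  rw [hrep T s hs, hrep U t ht]
  exact hind.measure_inter_preimage_eq_mul _ _
    (Set.to_countable _).measurableSet (Set.to_countable _).measurableSet

lemma zero_bound {Ω A : Type*} [MeasurableSpace Ω] (μ : Measure Ω) [IsProbabilityMeasure μ]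
    (r : ℝ) (hr0 : 0 ≤ r)
    (I : A → Ω → ℕ) (hmeas : ∀ x, Measurable (I x))
    (h01 : ∀ x ω, I x ω = 0 ∨ I x ω = 1)
    (hlb : ∀ x, ENNReal.ofReal r ≤ μ {ω | I x ω = 1}) (a : A) :
    μ {ω | I a ω = 0} ≤ ENNReal.ofReal (1 - r) := by
  have hset : {ω | I a ω = 0} = {ω | I a ω = 1}ᶜ := by
    ext ω
    rcases h01 a ω with h | h <;> simp [h]
  have hm : MeasurableSet {ω | I a ω = 1} := by
    have : {ω | I a ω = 1} = I a ⁻¹' {1} := rfl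
    rw [this]
    exact hmeas a (measurableSet_singleton 1)
  rw [hset, prob_compl_eq_one_sub hm, ENNReal.ofReal_sub 1 hr0, ENNReal.ofReal_one]
  exact tsub_le_tsub_left (hlb a) 1

lemma prod_zeros {Ω A : Type*} [MeasurableSpace Ω] (μ : Measure Ω) [IsProbabilityMeasure μ]
    [DecidableEq A] (r : ℝ) (hr0 : 0 ≤ r)
    (I : A → Ω → ℕ) (hmeas : ∀ x, Measurable (I x))
    (h01 : ∀ x ω, I x ω = 0 ∨ I x ω = 1)
    (hindep : iIndepFun I μ)
    (hlb : ∀ x, ENNReal.ofReal r ≤ μ {ω | I x ω = 1})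
    (F : Finset A) (t : Set Ω) (U : Finset A)
    (ht : ∀ ω ω', (∀ y ∈ U, I y ω = I y ω') → ω ∈ t → ω' ∈ t)
    (hFU : Disjoint F U) :
    μ ((⋂ y ∈ F, {ω | I y ω = 0}) ∩ t) ≤ ENNReal.ofReal (1 - r) ^ F.card * μ t := by
  classical
  induction F using Finset.induction with
  | empty => simp
  | @insert a F' ha ih =>
    have hdisj : Disjoint F' U := (Finset.disjoint_insert_left.mp hFU).2
    have haU : a ∉ U := (Finset.disjoint_insert_left.mp hFU).1
    have hsplit : ((⋂ y ∈ insert a F', {ω | I y ω = 0}) ∩ t)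
        = {ω | I a ω = 0} ∩ ((⋂ y ∈ F', {ω | I y ω = 0}) ∩ t) := by
      rw [Finset.set_biInter_insert, Set.inter_assoc]
    have hmul : μ ({ω | I a ω = 0} ∩ ((⋂ y ∈ F', {ω | I y ω = 0}) ∩ t))
        = μ {ω | I a ω = 0} * μ ((⋂ y ∈ F', {ω | I y ω = 0}) ∩ t) := by
      apply dep_mul μ I hmeas hindep {a} (F' ∪ U)
      · simp [Finset.disjoint_union_right, ha, haU]
      · intro ω ω' h hω
        have := h a (Finset.mem_singleton_self a)
        simpa [← this] using hω
      · rintro ω ω' h ⟨h1, h2⟩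
        refine ⟨?_, ht ω ω' (fun y hy => h y (Finset.mem_union_right _ hy)) h2⟩
        simp only [Set.mem_iInter] at h1 ⊢
        intro y hy
        show I y ω' = 0
        rw [← h y (Finset.mem_union_left _ hy)]
        exact h1 y hy
    rw [hsplit, hmul, Finset.card_insert_of_notMem ha, pow_succ, mul_comm _ (ENNReal.ofReal (1-r)),
      mul_assoc]
    exact mul_le_mul' (zero_bound μ r hr0 I hmeas h01 hlb a) (ih hdisj)

lemma main_bound {Ω A B : Type*} [MeasurableSpace Ω] (μ : Measure Ω) [IsProbabilityMeasure μ]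
    [DecidableEq A] [DecidableEq B]
    (f : A → B) (r : ℝ) (hr0 : 0 ≤ r) (hr1 : r ≤ 1)
    (I : A → Ω → ℕ) (hmeas : ∀ x, Measurable (I x))
    (h01 : ∀ x ω, I x ω = 0 ∨ I x ω = 1)
    (hindep : iIndepFun I μ)
    (hlb : ∀ x, ENNReal.ofReal r ≤ μ {ω | I x ω = 1})
    (S : Finset A) :
    μ {ω | ∀ b : B, (S.filter fun x => f x = b ∧ I x ω = 1).card ≤ 1}
      ≤ ENNReal.ofReal (1 - r ^ 2) ^ (S.card - (S.image f).card) := by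
  classical
  induction S using Finset.strongInduction with
  | _ S ih =>
  rcases S.eq_empty_or_nonempty with rfl | ⟨x, hx⟩
  · simp
  set q2 := ENNReal.ofReal (1 - r ^ 2) with hq2def
  set qE := ENNReal.ofReal (1 - r) with hqEdef
  set ρ := ENNReal.ofReal r with hρdef
  set S' := S.erase x with hS'
  set F := S'.filter (fun y => f y = f x) with hFdef
  set G := S' \ F with hGdef
  have hS'ss : S' ⊂ S := Finset.erase_ssubset hx
  have hGS' : G ⊆ S' := Finset.sdiff_subset
  have hmono : ∀ (T U : Finset A), T ⊆ U →
      {ω | ∀ b : B, (U.filter fun x => f x = b ∧ I x ω = 1).card ≤ 1} ⊆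
      {ω | ∀ b : B, (T.filter fun x => f x = b ∧ I x ω = 1).card ≤ 1} := by
    intro T U hTU ω hω b
    exact le_trans (Finset.card_le_card (Finset.filter_subset_filter _ hTU)) (hω b)
  have hdep : ∀ (T : Finset A) (ω ω' : Ω), (∀ y ∈ T, I y ω = I y ω') →
      ω ∈ {ω | ∀ b : B, (T.filter fun x => f x = b ∧ I x ω = 1).card ≤ 1} →
      ω' ∈ {ω | ∀ b : B, (T.filter fun x => f x = b ∧ I x ω = 1).card ≤ 1} := by
    intro T ω ω' h hω b
    have heq : (T.filter fun x => f x = b ∧ I x ω' = 1)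
        = (T.filter fun x => f x = b ∧ I x ω = 1) := by
      apply Finset.filter_congr
      intro y hy
      simp [h y hy]
    show (T.filter fun x => f x = b ∧ I x ω' = 1).card ≤ 1
    rw [heq]
    exact hω b
  -- decomposition of the event
  have hsub : {ω | ∀ b : B, (S.filter fun x => f x = b ∧ I x ω = 1).card ≤ 1} ⊆
      ({ω | I x ω = 0} ∩ {ω | ∀ b : B, (S'.filter fun x => f x = b ∧ I x ω = 1).card ≤ 1}) ∪
      ({ω | I x ω = 1} ∩ ((⋂ y ∈ F, {ω | I y ω = 0}) ∩
        {ω | ∀ b : B, (G.filter fun x => f x = b ∧ I x ω = 1).card ≤ 1})) := by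
    intro ω hω
    rcases h01 x ω with h0 | h1
    · exact Or.inl ⟨h0, hmono S' S (Finset.erase_subset x S) hω⟩
    · refine Or.inr ⟨h1, ⟨?_, hmono G S (hGS'.trans (Finset.erase_subset x S)) hω⟩⟩
      simp only [Set.mem_iInter]
      intro y hy
      show I y ω = 0
      by_contra hne
      have hy1 : I y ω = 1 := (h01 y ω).resolve_left hne
      have hyS' : y ∈ S' := (Finset.mem_filter.mp hy).1
      have hyfx : f y = f x := (Finset.mem_filter.mp hy).2
      have h2 : 1 < (S.filter fun z => f z = f x ∧ I z ω = 1).card := by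
        apply Finset.one_lt_card.mpr
        refine ⟨x, ?_, y, ?_, ?_⟩
        · exact Finset.mem_filter.mpr ⟨hx, rfl, h1⟩
        · exact Finset.mem_filter.mpr ⟨Finset.mem_of_mem_erase hyS', hyfx, hy1⟩
        · exact (Finset.ne_of_mem_erase hyS').symm
      exact absurd (hω (f x)) (not_le.mpr h2)
  have hle1 := (measure_mono (μ := μ) hsub).trans (measure_union_le _ _)
  -- independence computations
  have hxS' : Disjoint ({x} : Finset A) S' := by
    simp [hS', Finset.disjoint_singleton_left]
  have hA1 : μ ({ω | I x ω = 0} ∩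
        {ω | ∀ b : B, (S'.filter fun x => f x = b ∧ I x ω = 1).card ≤ 1})
      = μ {ω | I x ω = 0} *
        μ {ω | ∀ b : B, (S'.filter fun x => f x = b ∧ I x ω = 1).card ≤ 1} := by
    apply dep_mul μ I hmeas hindep {x} S' hxS'
    · intro ω ω' h hω
      show I x ω' = 0
      rw [← h x (Finset.mem_singleton_self x)]
      exact hω
    · exact hdep S'
  have hdepInner : ∀ (ω ω' : Ω), (∀ y ∈ S', I y ω = I y ω') →
      ω ∈ ((⋂ y ∈ F, {ω | I y ω = 0}) ∩
        {ω | ∀ b : B, (G.filter fun x => f x = b ∧ I x ω = 1).card ≤ 1}) →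
      ω' ∈ ((⋂ y ∈ F, {ω | I y ω = 0}) ∩
        {ω | ∀ b : B, (G.filter fun x => f x = b ∧ I x ω = 1).card ≤ 1}) := by
    rintro ω ω' h ⟨h1, h2⟩
    refine ⟨?_, hdep G ω ω' (fun y hy => h y (hGS' hy)) h2⟩
    simp only [Set.mem_iInter] at h1 ⊢
    intro y hy
    show I y ω' = 0
    rw [← h y (Finset.mem_filter.mp hy).1]
    exact h1 y hy
  have hA2 : μ ({ω | I x ω = 1} ∩ ((⋂ y ∈ F, {ω | I y ω = 0}) ∩
        {ω | ∀ b : B, (G.filter fun x => f x = b ∧ I x ω = 1).card ≤ 1}))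
      = μ {ω | I x ω = 1} * μ ((⋂ y ∈ F, {ω | I y ω = 0}) ∩
        {ω | ∀ b : B, (G.filter fun x => f x = b ∧ I x ω = 1).card ≤ 1}) := by
    apply dep_mul μ I hmeas hindep {x} S' hxS'
    · intro ω ω' h hω
      show I x ω' = 1
      rw [← h x (Finset.mem_singleton_self x)]
      exact hω
    · exact hdepInner
  have hinner : μ ((⋂ y ∈ F, {ω | I y ω = 0}) ∩
        {ω | ∀ b : B, (G.filter fun x => f x = b ∧ I x ω = 1).card ≤ 1})
      ≤ qE ^ F.card *
        μ {ω | ∀ b : B, (G.filter fun x => f x = b ∧ I x ω = 1).card ≤ 1} :=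
    prod_zeros μ r hr0 I hmeas h01 hindep hlb F _ G (hdep G) Finset.disjoint_sdiff
  -- probability of I x
  set p := μ {ω | I x ω = 1} with hpdef
  have hp1 : p ≤ 1 := prob_le_one
  have hρp : ρ ≤ p := hlb x
  have hmx : MeasurableSet {ω | I x ω = 1} := hmeas x (measurableSet_singleton 1)
  have h1p : μ {ω | I x ω = 0} = 1 - p := by
    have hset : {ω | I x ω = 0} = {ω | I x ω = 1}ᶜ := by
      ext ω
      rcases h01 x ω with h | h <;> simp [h]
    rw [hset, prob_compl_eq_one_sub hmx]
  -- card arithmetic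
  have hcardS : S.card = S'.card + 1 := (Finset.card_erase_add_one hx).symm
  have himS : S.image f = insert (f x) (S'.image f) := by
    conv_lhs => rw [← Finset.insert_erase hx]
    rw [Finset.image_insert]
  -- real/ennreal facts
  have hq0 : (0:ℝ) ≤ 1 - r := by linarith
  have hq20 : (0:ℝ) ≤ 1 - r ^ 2 := by nlinarith
  have hqEq2 : qE ≤ q2 := ENNReal.ofReal_le_ofReal (by nlinarith)
  have hqE1 : qE ≤ 1 := ENNReal.ofReal_le_one.mpr (by linarith)
  have h1ρ : (1 : ENNReal) - ρ = qE := by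
    rw [hqEdef, hρdef, ENNReal.ofReal_sub 1 hr0, ENNReal.ofReal_one]
  have hkey2 : qE + ρ * qE = q2 := by
    rw [hqEdef, hρdef, hq2def, ← ENNReal.ofReal_mul hr0,
      ← ENNReal.ofReal_add hq0 (by nlinarith)]
    congr 1
    ring
  rcases F.eq_empty_or_nonempty with hFe | ⟨y0, hy0⟩
  · -- x's fiber is a singleton in S
    have hfx : f x ∉ S'.image f := by
      intro hmem
      obtain ⟨y, hyS', hyfx⟩ := Finset.mem_image.mp hmem
      have : y ∈ F := Finset.mem_filter.mpr ⟨hyS', hyfx⟩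
      simp [hFe] at this
    have hexp : S.card - (S.image f).card = S'.card - (S'.image f).card := by
      rw [hcardS, himS, Finset.card_insert_of_notMem hfx]
      omega
    rw [hexp]
    exact (measure_mono (hmono S' S (Finset.erase_subset x S))).trans (ih S' hS'ss)
  · -- x's fiber contains another element
    have hfx : f x ∈ S'.image f :=
      Finset.mem_image.mpr ⟨y0, (Finset.mem_filter.mp hy0).1, (Finset.mem_filter.mp hy0).2⟩
    have himG : G.image f = (S'.image f).erase (f x) := by
      ext b
      simp only [Finset.mem_image, Finset.mem_erase, hGdef, Finset.mem_sdiff, hFdef,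
        Finset.mem_filter]
      constructor
      · rintro ⟨y, ⟨hyS', hyn⟩, rfl⟩
        exact ⟨fun hh => hyn ⟨hyS', hh⟩, y, hyS', rfl⟩
      · rintro ⟨hb, y, hyS', rfl⟩
        exact ⟨y, ⟨hyS', fun hh => hb hh.2⟩, rfl⟩
    have hGcard : G.card = S'.card - F.card := Finset.card_sdiff_of_subset (Finset.filter_subset _ _)
    have hGim : (G.image f).card = (S'.image f).card - 1 := by
      rw [himG, Finset.card_erase_of_mem hfx]
    have hm1 : 1 ≤ F.card := Finset.card_pos.mpr ⟨y0, hy0⟩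
    have hma : F.card ≤ S'.card := Finset.card_le_card (Finset.filter_subset _ _)
    have hia : (S'.image f).card ≤ S'.card := Finset.card_image_le
    have hi1 : 1 ≤ (S'.image f).card := Finset.card_pos.mpr ⟨f x, hfx⟩
    have hGimle : (G.image f).card ≤ G.card := Finset.card_image_le
    set ℓ' := S'.card - (S'.image f).card with hℓ'def
    set ℓG := G.card - (G.image f).card with hℓGdef
    obtain ⟨k, hk⟩ : ∃ k, F.card = k + 1 := ⟨F.card - 1, by omega⟩
    have hℓ'eq : ℓ' = k + ℓG := by
      rw [hℓ'def, hℓGdef, hGcard, hGim]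
      omega
    have hexp : S.card - (S.image f).card = ℓ' + 1 := by
      rw [hcardS, himS, Finset.insert_eq_self.mpr hfx, hℓ'def]
      omega
    -- ENNReal chain
    set A0 := q2 ^ ℓ' with hA0def
    set B0 := qE ^ F.card * q2 ^ ℓG with hB0def
    have hB0A : B0 ≤ qE * A0 := by
      rw [hB0def, hA0def, hk, hℓ'eq, pow_succ, pow_add]
      calc qE ^ k * qE * q2 ^ ℓG ≤ q2 ^ k * qE * q2 ^ ℓG := by
            gcongr
        _ = qE * (q2 ^ k * q2 ^ ℓG) := by ring
    have hB0A' : B0 ≤ A0 := hB0A.trans (by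
      calc qE * A0 ≤ 1 * A0 := by gcongr
        _ = A0 := one_mul _)
    have hES' : μ {ω | ∀ b : B, (S'.filter fun x => f x = b ∧ I x ω = 1).card ≤ 1} ≤ A0 :=
      ih S' hS'ss
    have hEG : μ {ω | ∀ b : B, (G.filter fun x => f x = b ∧ I x ω = 1).card ≤ 1} ≤ q2 ^ ℓG :=
      ih G (Finset.ssubset_of_subset_of_ssubset hGS' hS'ss)
    rw [hexp]
    calc μ {ω | ∀ b : B, (S.filter fun x => f x = b ∧ I x ω = 1).card ≤ 1}
        ≤ _ + _ := hle1
      _ = (1 - p) * μ {ω | ∀ b : B, (S'.filter fun x => f x = b ∧ I x ω = 1).card ≤ 1}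
          + p * μ ((⋂ y ∈ F, {ω | I y ω = 0}) ∩
            {ω | ∀ b : B, (G.filter fun x => f x = b ∧ I x ω = 1).card ≤ 1}) := by
          rw [hA1, hA2, h1p]
      _ ≤ (1 - p) * A0 + p * B0 := by
          gcongr
          exact hinner.trans (by rw [hB0def]; gcongr)
      _ = (1 - p) * A0 + ((p - ρ) * B0 + ρ * B0) := by
          rw [← add_mul, tsub_add_cancel_of_le hρp]
      _ ≤ (1 - p) * A0 + ((p - ρ) * A0 + ρ * B0) := by gcongr
      _ = ((1 - p) + (p - ρ)) * A0 + ρ * B0 := by ring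
      _ = (1 - ρ) * A0 + ρ * B0 := by rw [tsub_add_tsub_cancel hp1 hρp]
      _ ≤ (1 - ρ) * A0 + ρ * (qE * A0) := by gcongr
      _ = (qE + ρ * qE) * A0 := by rw [h1ρ]; ring
      _ = q2 * A0 := by rw [hkey2]
      _ = q2 ^ (ℓ' + 1) := by rw [pow_succ]; ring

/-- **Fiberwise collision bound for independent Bernoulli indicators.**
Let `A` be a finite set, `f : A → B`, and `ℓ̃ := |A| − |f(A)|`.  If
`(I x)_{x ∈ A}` are independent `{0,1}`-valued random variables with
`Pr[I x = 1] ≥ r` for each `x`, `r ∈ [0,1]`, then the probability that every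
fiber of `f` contains at most one `x` with `I x = 1` is at most
`(1 − r²)^{ℓ̃}`, and hence at most `exp(−ℓ̃ · r²)`. -/
theorem fiberwise_collision_bound
    {Ω : Type*} [MeasurableSpace Ω] (μ : Measure Ω) [IsProbabilityMeasure μ]
    {A B : Type*} [Fintype A] [DecidableEq A] [DecidableEq B]
    (f : A → B)
    (ℓt : ℕ) (hℓ : ℓt = Fintype.card A - (Finset.univ.image f).card)
    (r : ℝ) (hr0 : 0 ≤ r) (hr1 : r ≤ 1)
    (I : A → Ω → ℕ) (hmeas : ∀ x, Measurable (I x))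
    (h01 : ∀ x ω, I x ω = 0 ∨ I x ω = 1)
    (hindep : iIndepFun I μ)
    (hlb : ∀ x, ENNReal.ofReal r ≤ μ {ω | I x ω = 1}) :
    μ {ω | ∀ b : B,
        (Finset.univ.filter fun x => f x = b ∧ I x ω = 1).card ≤ 1} ≤
        ENNReal.ofReal ((1 - r ^ 2) ^ ℓt) ∧
      μ {ω | ∀ b : B,
          (Finset.univ.filter fun x => f x = b ∧ I x ω = 1).card ≤ 1} ≤
        ENNReal.ofReal (Real.exp (-(ℓt : ℝ) * r ^ 2)) := by
  classical
  have h1 : μ {ω | ∀ b : B, (Finset.univ.filter fun x => f x = b ∧ I x ω = 1).card ≤ 1}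
      ≤ ENNReal.ofReal ((1 - r ^ 2) ^ ℓt) := by
    have hmain := main_bound μ f r hr0 hr1 I hmeas h01 hindep hlb Finset.univ
    rw [hℓ, ← Finset.card_univ, ENNReal.ofReal_pow (by nlinarith)]
    exact hmain
  refine ⟨h1, h1.trans ?_⟩
  apply ENNReal.ofReal_le_ofReal
  have h2 : (1 - r ^ 2) ≤ Real.exp (-r ^ 2) := by
    have := Real.add_one_le_exp (-r ^ 2)
    linarith
  calc (1 - r ^ 2) ^ ℓt ≤ Real.exp (-r ^ 2) ^ ℓt := pow_le_pow_left₀ (by nlinarith) h2 ℓt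
    _ = Real.exp (-(ℓt:ℝ) * r ^ 2) := by
        rw [← Real.exp_nat_mul]
        congr 1
        ring
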